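/- For λ, μ ∈ ℂ* and α, β ∈ ℂ, the Ramond modules Ω_R(λ, α) and Ω_R(μ, β) are isomorphic as R-modules if and only if λ = μ and α = β. -/

import Mathlib

open Polynomial

/-- `L_m` on the even part `ℂ[x²]` (coordinate `t = x²`): `f ↦ λ^m (t + mα) f(t+m)`. -/
noncomputable def l0 (l a : ℂ) (m : ℤ) (f : Polynomial ℂ) : Polynomial ℂ :=
  l ^ m • ((X + C ((m : ℂ) * a)) * f.comp (X + C (m : ℂ)))

/-- `L_m` on the odd part `xℂ[x²]` (coordinate `t = x²`): `f ↦ λ^m (t + mα + m/2) f(t+m)`. -/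
noncomputable def l1 (l a : ℂ) (m : ℤ) (f : Polynomial ℂ) : Polynomial ℂ :=
  l ^ m • ((X + C ((m : ℂ) * a + (m : ℂ) / 2)) * f.comp (X + C (m : ℂ)))

/-- `G_m` from the even part to the odd part: `f(x²) ↦ λ^m x f(x²+m)`. -/
noncomputable def g01 (l : ℂ) (m : ℤ) (f : Polynomial ℂ) : Polynomial ℂ :=
  l ^ m • f.comp (X + C (m : ℂ))

/-- `G_m` from the odd part to the even part: `x f(x²) ↦ λ^m (x² + 2mα) f(x²+m)`. -/
noncomputable def g10 (l a : ℂ) (m : ℤ) (f : Polynomial ℂ) : Polynomial ℂ :=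
  l ^ m • ((X + C (2 * (m : ℂ) * a)) * f.comp (X + C (m : ℂ)))

/-- `L_m` on `Ω_R(λ,α) = ℂ[x²] ⊕ xℂ[x²]`, a pair `(f, g)` representing `f(x²) + x g(x²)`. -/
noncomputable def RL (l a : ℂ) (m : ℤ) (v : Polynomial ℂ × Polynomial ℂ) :
    Polynomial ℂ × Polynomial ℂ :=
  (l0 l a m v.1, l1 l a m v.2)

/-- `G_m` on `Ω_R(λ,α)`. -/
noncomputable def RG (l a : ℂ) (m : ℤ) (v : Polynomial ℂ × Polynomial ℂ) :
    Polynomial ℂ × Polynomial ℂ :=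
  (g10 l a m v.2, g01 l m v.1)

/-- An isomorphism of `R`-modules `Ω_R(λ,α) → Ω_R(μ,β)`: a pair of linear equivalences of
the even and odd parts intertwining the actions of all `L_m` and `G_m`. -/
def RModIso (l a mu b : ℂ) : Prop :=
  ∃ (e0 e1 : Polynomial ℂ ≃ₗ[ℂ] Polynomial ℂ), ∀ (m : ℤ) (f : Polynomial ℂ),
    e0 (l0 l a m f) = l0 mu b m (e0 f)
    ∧ e1 (l1 l a m f) = l1 mu b m (e1 f)
    ∧ e1 (g01 l m f) = g01 mu m (e0 f)
    ∧ e0 (g10 l a m f) = g10 mu b m (e1 f)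

/-- `Ω_R(λ,α) ≅ Ω_R(μ,β)` as `R`-modules iff `λ = μ` and `α = β`. -/
lemma key_scalar (e : Polynomial ℂ ≃ₗ[ℂ] Polynomial ℂ)
    (h : ∀ f, e (X * f) = X * e f) :
    ∃ c : ℂ, c ≠ 0 ∧ ∀ f, e f = C c * f := by
  have hpow : ∀ n : ℕ, e (X ^ n) = e 1 * X ^ n := by
    intro n
    induction n with
    | zero => simp
    | succ n ih =>
      have : (X : Polynomial ℂ) ^ (n + 1) = X * X ^ n := by ring
      rw [this, h, ih]; ring
  have hmul : ∀ f, e f = e 1 * f := by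
    intro f
    induction f using Polynomial.induction_on' with
    | add p q hp hq => rw [map_add, hp, hq, mul_add]
    | monomial n a =>
      have : (monomial n a : Polynomial ℂ) = a • X ^ n := by
        rw [smul_eq_C_mul, C_mul_X_pow_eq_monomial]
      rw [this, map_smul, hpow, smul_eq_C_mul, smul_eq_C_mul]; ring
  have hu : IsUnit (e 1) := by
    refine IsUnit.of_mul_eq_one (e.symm 1) ?_
    have := hmul (e.symm 1)
    rw [e.apply_symm_apply] at this
    exact this.symm
  obtain ⟨r, hr, hre⟩ := Polynomial.isUnit_iff.mp hu
  exact ⟨r, isUnit_iff_ne_zero.mp hr, fun f => by rw [hmul, ← hre]⟩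

theorem ramond_iso_iff (l mu a b : ℂ) (hl : l ≠ 0) (hmu : mu ≠ 0) :
    RModIso l a mu b ↔ l = mu ∧ a = b := by
  constructor
  · rintro ⟨e0, e1, h⟩
    have h0X : ∀ f, e0 (X * f) = X * e0 f := by
      intro f
      have := (h 0 f).1
      simpa [l0] using this
    have h1X : ∀ f, e1 (X * f) = X * e1 f := by
      intro f
      have := (h 0 f).2.1
      simpa [l1] using this
    obtain ⟨c0, hc0, he0⟩ := key_scalar e0 h0X
    obtain ⟨c1, hc1, he1⟩ := key_scalar e1 h1X
    -- G relation at f = 1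
    have hg : ∀ m : ℤ, l ^ m * c1 = mu ^ m * c0 := by
      intro m
      have := (h m 1).2.2.1
      rw [he1, he0] at this
      simp only [g01, one_comp, smul_eq_C_mul, mul_one] at this
      have := congrArg (fun p => Polynomial.coeff p 0) this
      simpa [mul_comm] using this
    have hc01 : c1 = c0 := by
      have := hg 0
      simpa using this
    have hlmu : l = mu := by
      have := hg 1
      rw [zpow_one, zpow_one, hc01] at this
      exact mul_right_cancel₀ hc0 this
    refine ⟨hlmu, ?_⟩
    -- L relation at m = 1, f = 1
    have := (h 1 1).1
    rw [he0, he0] at this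
    simp only [l0, one_comp, C_comp, mul_one, smul_eq_C_mul, zpow_one, Int.cast_one, one_mul,
      hlmu] at this
    have h2 : (X + C a : Polynomial ℂ) = X + C b := by
      have hmu' : (C mu : Polynomial ℂ) ≠ 0 := by simpa using hmu
      have hc0' : (C c0 : Polynomial ℂ) ≠ 0 := by simpa using hc0
      apply mul_left_cancel₀ hmu'
      apply mul_right_cancel₀ hc0'
      ring_nf
      ring_nf at this
      linear_combination this
    have := congrArg (fun p => Polynomial.coeff p 0) h2
    simpa using this
  · rintro ⟨rfl, rfl⟩
    exact ⟨LinearEquiv.refl ℂ _, LinearEquiv.refl ℂ _, fun m f => ⟨rfl, rfl, rfl, rfl⟩⟩
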